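/- Let ν be a valuation on ℂ[z₁,…,zₙ] and let f₁,…,fₘ ∈ ℂ[z₁,…,zₙ] be polynomials with ν(fⱼ) > 0 for all j, whose common zero set is {0}. Then ν(zₗ) > 0 for every 1 ≤ ℓ ≤ n. -/

import Mathlib

open MvPolynomial

/-- If ν is a valuation on ℂ[z₁,…,zₙ], the polynomials f₁,…,fₘ satisfy ν(fⱼ) > 0
and their common zero set is {0}, then ν(zₗ) > 0 for every ℓ. -/
theorem stmt_2 (n m : ℕ) (ν : MvPolynomial (Fin n) ℂ → ℝ)
    (hnn : ∀ f, 0 ≤ ν f)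
    (hmul : ∀ f g, f ≠ 0 → g ≠ 0 → ν (f * g) = ν f + ν g)
    (hadd : ∀ f g, f ≠ 0 → g ≠ 0 → f + g ≠ 0 → min (ν f) (ν g) ≤ ν (f + g))
    (hconst : ∀ c : ℂ, c ≠ 0 → ν (C c) = 0)
    (f : Fin m → MvPolynomial (Fin n) ℂ) (hf0 : ∀ j, f j ≠ 0)
    (hfpos : ∀ j, 0 < ν (f j))
    (hzero : ∀ x : Fin n → ℂ, (∀ j, eval x (f j) = 0) → x = 0) :
    ∀ l : Fin n, 0 < ν (X l) := by
  intro l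
  set I : Ideal (MvPolynomial (Fin n) ℂ) := Ideal.span (Set.range f) with hI
  -- every nonzero element of I has positive valuation
  have key : ∀ p ∈ I, p = 0 ∨ 0 < ν p := by
    intro p hp
    have : p ≠ 0 → 0 < ν p := by
      refine Submodule.span_induction ?_ ?_ ?_ ?_ hp
      · rintro q ⟨j, rfl⟩ _; exact hfpos j
      · intro h; exact absurd rfl h
      · intro a b _ _ ha hb hab
        by_cases ha0 : a = 0
        · subst ha0; rw [zero_add] at hab ⊢; exact hb hab
        by_cases hb0 : b = 0
        · subst hb0; rw [add_zero] at hab ⊢; exact ha hab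
        exact lt_of_lt_of_le (lt_min (ha ha0) (hb hb0)) (hadd a b ha0 hb0 hab)
      · intro r a _ ha hra
        have hr : r ≠ 0 := fun h => hra (by simp [h])
        have ha0 : a ≠ 0 := fun h => hra (by simp [h])
        have : ν (r * a) = ν r + ν a := hmul r a hr ha0
        simp only [smul_eq_mul, this]
        have := hnn r
        linarith [ha ha0]
    exact or_iff_not_imp_left.2 this
  -- X l is in the radical of I
  have hXl : X l ∈ I.radical := by
    rw [← vanishingIdeal_zeroLocus_eq_radical (K := ℂ), mem_vanishingIdeal_iff]
    intro x hx
    have hx0 : x = 0 := by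
      apply hzero
      intro j
      exact hx (f j) (Ideal.subset_span ⟨j, rfl⟩)
    subst hx0
    simp
  obtain ⟨k, hk⟩ := hXl
  have hXne : (X l : MvPolynomial (Fin n) ℂ) ≠ 0 := X_ne_zero l
  have hpow : ∀ j : ℕ, ν (X l ^ j) = j * ν (X l) := by
    intro j
    induction j with
    | zero => simpa using hconst 1 one_ne_zero
    | succ j ih =>
      rw [pow_succ, hmul _ _ (pow_ne_zero _ hXne) hXne, ih]
      push_cast; ring
  have hpne : (X l : MvPolynomial (Fin n) ℂ) ^ k ≠ 0 := pow_ne_zero _ hXne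
  rcases key _ hk with h | h
  · exact absurd h hpne
  · rw [hpow] at h
    rcases (hnn (X l)).eq_or_lt with he | hlt
    · rw [← he, mul_zero] at h; exact absurd h (lt_irrefl 0)
    · exact hlt
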